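/- Let F be a commutative ring, n ≥ 1, d ≥ 1, and let m be an element of the free magma on Fin n of degree d' ≤ d and depth l. Let Φ(m) ∈ C'_d(R) be the evaluation of m at (Z_1,…,Z_n) under the anticommutator product ⊙ (via the unique magma homomorphism from the free magma on Fin n to (C'_d(R), ⊙) sending x_i ↦ Z_i). Then: (1) for every 1 ≤ k1 ≤ d − d' + 1 and every 1 ≤ k2 ≤ d − l + 1, the (k1, k1 + d', k2) entry of Φ(m) equals the sum, over all choices ε of a Boolean for each internal node of m, of the product Π_{t=1}^{d'} z_{σ_{m_ε}(t), t + k1 − 1, l^{m_ε}_t + k2 − 1}; and (2) every entry Φ(m)[i1, i2, i3] with i2 ≠ i1 + d', as well as every entry with i2 = i1 + d' but i3 > d − l + 1, is zero. -/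

import Mathlib

noncomputable section

open scoped BigOperators

namespace NAPIT

/-- The list of (leaf label, leaf level) pairs of a nonassociative monomial (element of the
free magma), in left-to-right order, where the root of the monomial is at level `s`. -/
def leafData {n : ℕ} : FreeMagma (Fin n) → ℕ → List (Fin n × ℕ)
  | FreeMagma.of i, s => [(i, s)]
  | FreeMagma.mul x y, s => leafData x (s + 1) ++ leafData y (s + 1)

/-- The degree (number of leaves) of a nonassociative monomial. -/
def degM {n : ℕ} : FreeMagma (Fin n) → ℕ
  | FreeMagma.of _ => 1
  | FreeMagma.mul x y => degM x + degM y

/-- The depth of a nonassociative monomial (root at level 1; the depth is the maximal level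
of a leaf). -/
def depthM {n : ℕ} : FreeMagma (Fin n) → ℕ
  | FreeMagma.of _ => 1
  | FreeMagma.mul x y => max (depthM x) (depthM y) + 1

/-- Evaluation of a nonassociative monomial at `b : Fin n → A`, using `mul` as the product on
`A`; this is the unique magma homomorphism `FreeMagma (Fin n) → (A, mul)` with `x_i ↦ b i`. -/
def evalWith {n : ℕ} {A : Type*} (mul : A → A → A) (b : Fin n → A) : FreeMagma (Fin n) → A
  | FreeMagma.of i => b i
  | FreeMagma.mul x y => mul (evalWith mul b x) (evalWith mul b y)

/-- The multiset of all variants `m_ε` of a monomial `m`, where `ε` ranges over all choices of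
a Boolean for each internal node of `m`, and `m_ε` is obtained from `m` by swapping the two
children at exactly those internal nodes where `ε` is true (counted with multiplicity). -/
def variants {n : ℕ} : FreeMagma (Fin n) → Multiset (FreeMagma (Fin n))
  | FreeMagma.of i => {FreeMagma.of i}
  | FreeMagma.mul x y =>
      (variants x).bind fun x' => (variants y).bind fun y' =>
        {FreeMagma.mul x' y', FreeMagma.mul y' x'}

/-- The underlying module of the algebra `A'_d(R)`: arrays `x[i,j,k]` with
`i, j ∈ Fin (d+1)`, `k ∈ Fin d` (zero-based; the paper's indices are shifted by one). -/
def Arr (d : ℕ) (R : Type*) : Type _ := Fin (d + 1) → Fin (d + 1) → Fin d → R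

namespace Arr

variable {d : ℕ} {R : Type*}

instance instAddCommGroup [AddCommGroup R] : AddCommGroup (Arr d R) :=
  inferInstanceAs (AddCommGroup (Fin (d + 1) → Fin (d + 1) → Fin d → R))

instance instModule {S : Type*} [Semiring S] [AddCommGroup R] [Module S R] :
    Module S (Arr d R) :=
  inferInstanceAs (Module S (Fin (d + 1) → Fin (d + 1) → Fin d → R))

/-- The bilinear product `∘` of `A'_d(R)`:
`(x ∘ y)[i,j,k] = ∑_{l} x[i,l,k+1] * y[l,j,k+1]` if `k+1` is a legal third index, else `0`. -/
def aprod [CommRing R] (x y : Arr d R) : Arr d R := fun i j k =>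
  if h : (k : ℕ) + 1 < d then
    ∑ l : Fin (d + 1), x i l ⟨(k : ℕ) + 1, h⟩ * y l j ⟨(k : ℕ) + 1, h⟩
  else 0

instance instMul [CommRing R] : Mul (Arr d R) := ⟨aprod⟩

end Arr

/-- The algebra `C'_d(R)`: same underlying module as `A'_d(R)`, with the anticommutator
product `a ⊙ b = a ∘ b + b ∘ a`. -/
def CArr (d : ℕ) (R : Type*) : Type _ := Arr d R

namespace CArr

variable {d : ℕ} {R : Type*}

/-- The identity map `A'_d(R) → C'_d(R)` of underlying modules. -/
def ofArr (x : Arr d R) : CArr d R := x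

/-- The identity map `C'_d(R) → A'_d(R)` of underlying modules. -/
def toArr (x : CArr d R) : Arr d R := x

instance instAddCommGroup [AddCommGroup R] : AddCommGroup (CArr d R) :=
  inferInstanceAs (AddCommGroup (Arr d R))

instance instModule {S : Type*} [Semiring S] [AddCommGroup R] [Module S R] :
    Module S (CArr d R) :=
  inferInstanceAs (Module S (Arr d R))

instance instMul [CommRing R] : Mul (CArr d R) :=
  ⟨fun a b => ofArr (toArr a * toArr b + toArr b * toArr a)⟩

end CArr

/-- The element `Z_i ∈ A'_d(R)`, `R = MvPolynomial (Fin n × Fin d × Fin d) F`, whose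
`(j, j+1, k)` entry is the indeterminate `z_{i,j,k}` and whose other entries vanish. -/
def Z (F : Type*) [CommRing F] (n d : ℕ) (i : Fin n) :
    Arr d (MvPolynomial (Fin n × Fin d × Fin d) F) := fun j j' k =>
  if h : (j : ℕ) < d ∧ (j' : ℕ) = (j : ℕ) + 1 then
    MvPolynomial.X (i, ⟨(j : ℕ), h.1⟩, k)
  else 0

/-- The element `Z_i` regarded as an element of `C'_d(R)`. -/
def ZC (F : Type*) [CommRing F] (n d : ℕ) (i : Fin n) :
    CArr d (MvPolynomial (Fin n × Fin d × Fin d) F) := CArr.ofArr (Z F n d i)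

/-- The monomial `∏_{t=1}^{d'} z_{σ_m(t), (t-1) + k1, (l^m_t - 1) + k2}` associated to a
nonassociative monomial `m` of degree `d'` and offsets `k1, k2` (all indices zero-based; the
paper's 1-based offsets are `k1 + 1`, `k2 + 1`).  Indices which would fall out of range are
discarded (this never happens in the intended range of parameters). -/
def monProd (F : Type*) [CommRing F] {n : ℕ} (d : ℕ) (k1 k2 : ℕ) (m : FreeMagma (Fin n)) :
    MvPolynomial (Fin n × Fin d × Fin d) F :=
  (((leafData m 1).zipIdx.map Prod.swap).map fun p =>
    if h : p.1 + k1 < d ∧ p.2.2 - 1 + k2 < d then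
      MvPolynomial.X (p.2.1, ⟨p.1 + k1, h.1⟩, ⟨p.2.2 - 1 + k2, h.2⟩)
    else 0).prod

/-- `ψ(m) = ∑_ε ∏_{t=1}^{d'} z_{σ_{m_ε}(t), t, l^{m_ε}_t}` (1-based), the sum running over all
choices `ε` of a Boolean for each internal node of `m`. -/
def psi (F : Type*) [CommRing F] {n : ℕ} (d : ℕ) (m : FreeMagma (Fin n)) :
    MvPolynomial (Fin n × Fin d × Fin d) F :=
  ((variants m).map fun m' => monProd F d 0 0 m').sum

/-- The coefficient function of an element of the free nonunital nonassociative algebra. -/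
def coeffOf {F : Type*} [Semiring F] {n : ℕ}
    (f : FreeNonUnitalNonAssocAlgebra F (Fin n)) : FreeMagma (Fin n) →₀ F := f.coeff

/-- Evaluation of an element of the free nonunital nonassociative algebra on `x_1, …, x_n` at
the tuple `b`, with `mul` as the product of the target: the linear extension of
`m ↦ evalWith mul b m`, i.e. the unique nonunital `F`-algebra homomorphism sending
`x_i ↦ b i` into `(A, mul)`. -/
def evalNAWith {F : Type*} [Semiring F] {n : ℕ} {A : Type*}
    [AddCommMonoid A] [Module F A] (mul : A → A → A) (b : Fin n → A)
    (f : FreeNonUnitalNonAssocAlgebra F (Fin n)) : A :=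
  Finsupp.sum (coeffOf f) fun m c => c • evalWith mul b m

/-- Evaluation of an element of the free nonunital nonassociative algebra at a tuple `b` of
elements of a (not necessarily unital/associative) algebra `A`: the unique nonunital
`F`-algebra homomorphism sending `x_i ↦ b i`. -/
def evalNA {F : Type*} [Semiring F] {n : ℕ} {A : Type*}
    [AddCommMonoid A] [Mul A] [Module F A] (b : Fin n → A)
    (f : FreeNonUnitalNonAssocAlgebra F (Fin n)) : A :=
  evalNAWith (· * ·) b f

/-- Evaluation of an element of the unitization of the free nonunital nonassociative algebra
at a tuple `b` of elements of the unitization of `A`: the unique unital `F`-algebra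
homomorphism sending `x_i ↦ b i` (and the adjoined unit to the unit). -/
def evalUnit {F : Type*} [CommSemiring F] {n : ℕ} {A : Type*}
    [AddCommMonoid A] [Mul A] [Module F A] (b : Fin n → Unitization F A)
    (f : Unitization F (FreeNonUnitalNonAssocAlgebra F (Fin n))) : Unitization F A :=
  Unitization.inl f.fst + evalNA b f.snd

/-- The commutativity congruence on the free magma: the smallest equivalence relation with
`m₁ * m₂ ≈ m₂ * m₁` and compatible with the product. -/
inductive CommEq {n : ℕ} : FreeMagma (Fin n) → FreeMagma (Fin n) → Prop
  | refl (m : FreeMagma (Fin n)) : CommEq m m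
  | symm {a b : FreeMagma (Fin n)} : CommEq a b → CommEq b a
  | trans {a b c : FreeMagma (Fin n)} : CommEq a b → CommEq b c → CommEq a c
  | comm (a b : FreeMagma (Fin n)) : CommEq (a * b) (b * a)
  | mul_congr {a a' b b' : FreeMagma (Fin n)} :
      CommEq a a' → CommEq b b' → CommEq (a * b) (a' * b')

/-- The basis monomial `m` of the free nonunital nonassociative algebra. -/
def single1 (F : Type*) [Semiring F] {n : ℕ} (m : FreeMagma (Fin n)) :
    FreeNonUnitalNonAssocAlgebra F (Fin n) :=
  MonoidAlgebra.ofCoeff (Finsupp.single m 1 : FreeMagma (Fin n) →₀ F)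

/-- `I_comm`: the `F`-linear span of `{m − m' : m ≈ m'}` inside the free nonunital
nonassociative algebra. -/
def Icomm (F : Type*) [Field F] (n : ℕ) :
    Submodule F (FreeNonUnitalNonAssocAlgebra F (Fin n)) :=
  Submodule.span F
    {x | ∃ m m' : FreeMagma (Fin n), CommEq m m' ∧ x = single1 F m - single1 F m'}

section Aux

variable {F : Type*} [CommRing F] {n : ℕ}

lemma one_le_degM (m : FreeMagma (Fin n)) : 1 ≤ degM m := by
  induction m using FreeMagma.recOn with
  | of i => simp [degM]
  | mul x y ihx ihy => simp [degM]; omega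

lemma one_le_depthM (m : FreeMagma (Fin n)) : 1 ≤ depthM m := by
  induction m using FreeMagma.recOn with
  | of i => simp [depthM]
  | mul x y ihx ihy => simp [depthM]

lemma leafData_succ (m : FreeMagma (Fin n)) (s : ℕ) :
    leafData m (s + 1) = (leafData m s).map (fun p => (p.1, p.2 + 1)) := by
  induction m using FreeMagma.recOn generalizing s with
  | of i => simp [leafData]
  | mul x y ihx ihy => simp [leafData, ihx (s+1), ihy (s+1)]

lemma length_leafData (m : FreeMagma (Fin n)) (s : ℕ) : (leafData m s).length = degM m := by
  induction m using FreeMagma.recOn generalizing s with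
  | of i => simp [leafData, degM]
  | mul x y ihx ihy => simp [leafData, degM, ihx, ihy]

lemma level_bounds (m : FreeMagma (Fin n)) (s : ℕ) :
    ∀ p ∈ leafData m s, s ≤ p.2 ∧ p.2 + 1 ≤ s + depthM m := by
  induction m using FreeMagma.recOn generalizing s with
  | of i => simp [leafData, depthM]
  | mul x y ihx ihy =>
    intro p hp
    simp only [leafData, List.mem_append] at hp
    rcases hp with hp | hp
    · have := ihx (s+1) p hp; simp [depthM]; omega
    · have := ihy (s+1) p hp; simp [depthM]; omega

def monProdL (F : Type*) [CommRing F] {n : ℕ} (d : ℕ) :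
    ℕ → ℕ → List (Fin n × ℕ) → MvPolynomial (Fin n × Fin d × Fin d) F
  | _, _, [] => 1
  | k1, k2, p :: L =>
    (if h : k1 < d ∧ p.2 - 1 + k2 < d then
      MvPolynomial.X (p.1, ⟨k1, h.1⟩, ⟨p.2 - 1 + k2, h.2⟩) else 0) * monProdL F d (k1+1) k2 L

lemma enum_bridge (d k1 k2 : ℕ) (L : List (Fin n × ℕ)) (s : ℕ) :
    ((((L.zipIdx s).map Prod.swap).map fun p =>
      if h : p.1 + k1 < d ∧ p.2.2 - 1 + k2 < d then
        (MvPolynomial.X (p.2.1, ⟨p.1 + k1, h.1⟩, ⟨p.2.2 - 1 + k2, h.2⟩) :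
          MvPolynomial (Fin n × Fin d × Fin d) F)
      else 0).prod) = monProdL F d (s + k1) k2 L := by
  induction L generalizing s with
  | nil => simp [monProdL]
  | cons p L ih =>
    rw [List.zipIdx_cons, List.map_cons, List.map_cons, List.prod_cons, ih (s+1), monProdL]
    rw [show s + 1 + k1 = s + k1 + 1 from by omega]
    rfl

lemma monProd_eq (d k1 k2 : ℕ) (m : FreeMagma (Fin n)) :
    monProd F d k1 k2 m = monProdL F d k1 k2 (leafData m 1) := by
  have := enum_bridge (F := F) d k1 k2 (leafData m 1) 0
  rw [monProd, this, Nat.zero_add]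

lemma monProdL_append (d k1 k2 : ℕ) (A B : List (Fin n × ℕ)) :
    monProdL F d k1 k2 (A ++ B) =
      monProdL F d k1 k2 A * monProdL F d (k1 + A.length) k2 B := by
  induction A generalizing k1 with
  | nil => simp [monProdL]
  | cons p A ih =>
    simp only [List.cons_append, monProdL, List.append_eq, ih (k1+1), List.length_cons,
      mul_assoc]
    rw [show k1 + (A.length + 1) = k1 + 1 + A.length from by omega]

lemma monProdL_shift (d k1 k2 : ℕ) (L : List (Fin n × ℕ)) (hL : ∀ p ∈ L, 1 ≤ p.2) :
    monProdL F d k1 k2 (L.map fun p => (p.1, p.2 + 1)) = monProdL F d k1 (k2 + 1) L := by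
  induction L generalizing k1 with
  | nil => simp [monProdL]
  | cons p L ih =>
    have h1 : 1 ≤ p.2 := hL p (by simp)
    simp only [List.map_cons, monProdL]
    rw [ih (k1+1) (fun q hq => hL q (by simp [hq]))]
    congr 1
    simp only [show p.2 + 1 - 1 + k2 = p.2 - 1 + (k2 + 1) from by omega]

lemma monProd_mul (d k1 k2 : ℕ) (x y : FreeMagma (Fin n)) :
    monProd F d k1 k2 (x * y) =
      monProd F d k1 (k2+1) x * monProd F d (k1 + degM x) (k2+1) y := by
  rw [monProd_eq, monProd_eq, monProd_eq]
  show monProdL F d k1 k2 (leafData x 2 ++ leafData y 2) = _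
  rw [monProdL_append, show (2:ℕ) = 1 + 1 from rfl, leafData_succ x 1, leafData_succ y 1,
    monProdL_shift d k1 k2 _ (fun p hp => (level_bounds x 1 p hp).1),
    monProdL_shift d _ k2 _ (fun p hp => (level_bounds y 1 p hp).1),
    List.length_map, length_leafData]

lemma variants_mem {m m' : FreeMagma (Fin n)} (h : m' ∈ variants m) :
    degM m' = degM m ∧ depthM m' = depthM m := by
  induction m using FreeMagma.recOn generalizing m' with
  | of i =>
    simp only [variants, Multiset.mem_singleton] at h
    subst h; exact ⟨rfl, rfl⟩
  | mul x y ihx ihy =>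
    simp only [variants, Multiset.mem_bind] at h
    obtain ⟨x', hx', y', hy', h⟩ := h
    have hx := ihx hx'
    have hy := ihy hy'
    rcases (by simpa using h : m' = FreeMagma.mul x' y' ∨ m' = FreeMagma.mul y' x') with h | h <;>
      subst h <;> simp [degM, depthM, hx.1, hx.2, hy.1, hy.2] <;> omega

lemma monProd_of (d k1 k2 : ℕ) (i : Fin n) :
    monProd F d k1 k2 (FreeMagma.of i) =
      if h : k1 < d ∧ k2 < d then
        (MvPolynomial.X (i, ⟨k1, h.1⟩, ⟨k2, h.2⟩) : MvPolynomial (Fin n × Fin d × Fin d) F)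
      else 0 := by
  rw [monProd_eq]
  show (if h : k1 < d ∧ 1 - 1 + k2 < d then
      (MvPolynomial.X (i, ⟨k1, h.1⟩, ⟨1 - 1 + k2, h.2⟩) :
        MvPolynomial (Fin n × Fin d × Fin d) F) else 0) * 1 = _
  simp only [show 1 - 1 + k2 = k2 from by omega, mul_one]

lemma degM_mul (x y : FreeMagma (Fin n)) : degM (x * y) = degM x + degM y := rfl
lemma depthM_mul (x y : FreeMagma (Fin n)) :
    depthM (x * y) = max (depthM x) (depthM y) + 1 := rfl
lemma variants_mul (x y : FreeMagma (Fin n)) :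
    variants (FreeMagma.mul x y) = (variants x).bind fun x' => (variants y).bind fun y' =>
      ({FreeMagma.mul x' y', FreeMagma.mul y' x'} : Multiset _) := rfl

lemma main_lemma (d : ℕ) (m : FreeMagma (Fin n)) (hd' : degM m ≤ d) :
    (∀ (i1 i2 : Fin (d + 1)) (i3 : Fin d),
        (i2 : ℕ) = (i1 : ℕ) + degM m → (i3 : ℕ) + depthM m ≤ d →
        evalWith (fun a b : Arr d (MvPolynomial (Fin n × Fin d × Fin d) F) =>
            a * b + b * a) (Z F n d) m i1 i2 i3
          = ((variants m).map fun m' => monProd F d (i1 : ℕ) (i3 : ℕ) m').sum) ∧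
    (∀ (i1 i2 : Fin (d + 1)) (i3 : Fin d),
        (i2 : ℕ) ≠ (i1 : ℕ) + degM m →
        evalWith (fun a b : Arr d (MvPolynomial (Fin n × Fin d × Fin d) F) =>
            a * b + b * a) (Z F n d) m i1 i2 i3 = 0) ∧
    (∀ (i1 i2 : Fin (d + 1)) (i3 : Fin d),
        (i2 : ℕ) = (i1 : ℕ) + degM m → d < (i3 : ℕ) + depthM m →
        evalWith (fun a b : Arr d (MvPolynomial (Fin n × Fin d × Fin d) F) =>
            a * b + b * a) (Z F n d) m i1 i2 i3 = 0) := by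
  induction m using FreeMagma.recOn with
  | of i =>
    refine ⟨?_, ?_, ?_⟩
    · intro i1 i2 i3 h2 h3
      have h2' : (i2 : ℕ) = (i1 : ℕ) + 1 := h2
      have hi1 : (i1 : ℕ) < d := by have := i2.isLt; omega
      show Z F n d i i1 i2 i3 = _
      rw [show ((variants (FreeMagma.of i)).map fun m' =>
          monProd F d (i1 : ℕ) (i3 : ℕ) m').sum
          = monProd F d (i1 : ℕ) (i3 : ℕ) (FreeMagma.of i) from by
        simp [variants]]
      rw [Z, monProd_of, dif_pos ⟨hi1, h2'⟩, dif_pos ⟨hi1, i3.isLt⟩]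
    · intro i1 i2 i3 hne
      show Z F n d i i1 i2 i3 = 0
      rw [Z, dif_neg]
      intro h
      exact hne h.2
    · intro i1 i2 i3 _ h3
      exact absurd i3.isLt (by simp [depthM] at h3; omega)
  | mul x y ihx ihy =>
    have hdx1 := one_le_degM x
    have hdy1 := one_le_degM y
    have hlx1 := one_le_depthM x
    have hly1 := one_le_depthM y
    have hdxy : degM (FreeMagma.mul x y) = degM x + degM y := rfl
    have hdxd : degM x ≤ d := by omega
    have hdyd : degM y ≤ d := by omega
    obtain ⟨Hx1, Hx2, Hx3⟩ := ihx hdxd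
    obtain ⟨Hy1, Hy2, Hy3⟩ := ihy hdyd
    set A := evalWith (fun a b : Arr d (MvPolynomial (Fin n × Fin d × Fin d) F) =>
        a * b + b * a) (Z F n d) x with hA
    set B := evalWith (fun a b : Arr d (MvPolynomial (Fin n × Fin d × Fin d) F) =>
        a * b + b * a) (Z F n d) y with hB
    have hev : ∀ (i1 i2 : Fin (d + 1)) (i3 : Fin d),
        evalWith (fun a b : Arr d (MvPolynomial (Fin n × Fin d × Fin d) F) =>
            a * b + b * a) (Z F n d) (FreeMagma.mul x y) i1 i2 i3
        = (if h : (i3 : ℕ) + 1 < d then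
            ∑ l : Fin (d+1), A i1 l ⟨(i3:ℕ)+1, h⟩ * B l i2 ⟨(i3:ℕ)+1, h⟩ else 0)
          + (if h : (i3 : ℕ) + 1 < d then
            ∑ l : Fin (d+1), B i1 l ⟨(i3:ℕ)+1, h⟩ * A l i2 ⟨(i3:ℕ)+1, h⟩ else 0) :=
      fun _ _ _ => rfl
    have hmaxx : depthM x ≤ max (depthM x) (depthM y) := le_max_left _ _
    have hmaxy : depthM y ≤ max (depthM x) (depthM y) := le_max_right _ _
    refine ⟨?_, ?_, ?_⟩
    · -- statement (1)
      intro i1 i2 i3 h2 h3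
      rw [hdxy] at h2
      rw [show depthM (FreeMagma.mul x y) = max (depthM x) (depthM y) + 1 from rfl] at h3
      have hk : (i3 : ℕ) + 1 < d := by omega
      have hi2 := i2.isLt
      have hfx : (i1 : ℕ) + degM x < d + 1 := by omega
      have hfy : (i1 : ℕ) + degM y < d + 1 := by omega
      set k : Fin d := ⟨(i3:ℕ)+1, hk⟩ with hkdef
      rw [hev, dif_pos hk, dif_pos hk]
      have s1 : ∑ l : Fin (d+1), A i1 l k * B l i2 k
          = A i1 ⟨(i1:ℕ)+degM x, hfx⟩ k * B ⟨(i1:ℕ)+degM x, hfx⟩ i2 k := by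
        refine Finset.sum_eq_single_of_mem _ (Finset.mem_univ _) (fun l _ hl => ?_)
        rw [Hx2 i1 l k (fun hv => hl (Fin.ext hv)), zero_mul]
      have s2 : ∑ l : Fin (d+1), B i1 l k * A l i2 k
          = B i1 ⟨(i1:ℕ)+degM y, hfy⟩ k * A ⟨(i1:ℕ)+degM y, hfy⟩ i2 k := by
        refine Finset.sum_eq_single_of_mem _ (Finset.mem_univ _) (fun l _ hl => ?_)
        rw [Hy2 i1 l k (fun hv => hl (Fin.ext hv)), zero_mul]
      rw [s1, s2]
      rw [Hx1 i1 ⟨(i1:ℕ)+degM x, hfx⟩ k rfl (by simp only [hkdef]; omega)]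
      rw [Hy1 ⟨(i1:ℕ)+degM x, hfx⟩ i2 k (by simp; omega) (by simp only [hkdef]; omega)]
      rw [Hy1 i1 ⟨(i1:ℕ)+degM y, hfy⟩ k rfl (by simp only [hkdef]; omega)]
      rw [Hx1 ⟨(i1:ℕ)+degM y, hfy⟩ i2 k (by simp; omega) (by simp only [hkdef]; omega)]
      have hkval : (k : ℕ) = (i3 : ℕ) + 1 := rfl
      rw [variants_mul, Multiset.map_bind, Multiset.sum_bind]
      have inner : ∀ x' ∈ variants x,
          ((Multiset.map (fun m' => monProd F d (i1:ℕ) (i3:ℕ) m')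
            ((variants y).bind fun y' =>
              ({FreeMagma.mul x' y', FreeMagma.mul y' x'} : Multiset _)))).sum
          = monProd F d (i1:ℕ) ((i3:ℕ)+1) x'
              * ((variants y).map fun m' =>
                  monProd F d ((i1:ℕ)+degM x) ((i3:ℕ)+1) m').sum
            + ((variants y).map fun m' => monProd F d (i1:ℕ) ((i3:ℕ)+1) m').sum
              * monProd F d ((i1:ℕ)+degM y) ((i3:ℕ)+1) x' := by
        intro x' hx'
        rw [Multiset.map_bind, Multiset.sum_bind]
        have step : ∀ y' ∈ variants y,
            ((({FreeMagma.mul x' y', FreeMagma.mul y' x'} : Multiset _)).map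
              fun m' => monProd F d (i1:ℕ) (i3:ℕ) m').sum
            = monProd F d (i1:ℕ) ((i3:ℕ)+1) x'
                * monProd F d ((i1:ℕ)+degM x) ((i3:ℕ)+1) y'
              + monProd F d (i1:ℕ) ((i3:ℕ)+1) y'
                * monProd F d ((i1:ℕ)+degM y) ((i3:ℕ)+1) x' := by
          intro y' hy'
          have e1 : FreeMagma.mul x' y' = x' * y' := rfl
          have e2 : FreeMagma.mul y' x' = y' * x' := rfl
          simp only [Multiset.insert_eq_cons, Multiset.map_cons, Multiset.map_singleton,
            Multiset.sum_cons, Multiset.sum_singleton, e1, e2, monProd_mul,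
            (variants_mem hx').1, (variants_mem hy').1]
        rw [Multiset.map_congr rfl step]
        rw [Multiset.sum_map_add, Multiset.sum_map_mul_left, Multiset.sum_map_mul_right]
      rw [Multiset.map_congr rfl inner, Multiset.sum_map_add,
        Multiset.sum_map_mul_right, Multiset.sum_map_mul_left]
    · -- statement (2)
      intro i1 i2 i3 hne
      rw [hdxy] at hne
      rw [hev]
      rcases Nat.lt_or_ge ((i3:ℕ)+1) d with h | h
      · rw [dif_pos h, dif_pos h]
        rw [Finset.sum_eq_zero, Finset.sum_eq_zero, add_zero]
        · intro l _
          by_cases hc : (l : ℕ) = (i1 : ℕ) + degM y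
          · rw [Hx2 l i2 _ (by omega), mul_zero]
          · rw [Hy2 i1 l _ hc, zero_mul]
        · intro l _
          by_cases hc : (l : ℕ) = (i1 : ℕ) + degM x
          · rw [Hy2 l i2 _ (by omega), mul_zero]
          · rw [Hx2 i1 l _ hc, zero_mul]
      · rw [dif_neg (by omega), dif_neg (by omega), add_zero]
    · -- statement (3)
      intro i1 i2 i3 h2 h3
      rw [hdxy] at h2
      rw [show depthM (FreeMagma.mul x y) = max (depthM x) (depthM y) + 1 from rfl] at h3
      rw [hev]
      rcases Nat.lt_or_ge ((i3:ℕ)+1) d with h | h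
      · rw [dif_pos h, dif_pos h]
        rcases le_total (depthM y) (depthM x) with hcmp | hcmp
        · have hdeep : d < (i3:ℕ) + 1 + depthM x := by omega
          rw [Finset.sum_eq_zero, Finset.sum_eq_zero, add_zero]
          · intro l _
            by_cases hc : (l : ℕ) = (i1 : ℕ) + degM y
            · rw [Hx3 l i2 ⟨(i3:ℕ)+1, h⟩ (by omega) hdeep, mul_zero]
            · rw [Hy2 i1 l _ hc, zero_mul]
          · intro l _
            by_cases hc : (l : ℕ) = (i1 : ℕ) + degM x
            · rw [Hx3 i1 l ⟨(i3:ℕ)+1, h⟩ (by omega) hdeep, zero_mul]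
            · rw [Hx2 i1 l _ hc, zero_mul]
        · have hdeep : d < (i3:ℕ) + 1 + depthM y := by omega
          rw [Finset.sum_eq_zero, Finset.sum_eq_zero, add_zero]
          · intro l _
            by_cases hc : (l : ℕ) = (i1 : ℕ) + degM y
            · rw [Hy3 i1 l ⟨(i3:ℕ)+1, h⟩ (by omega) hdeep, zero_mul]
            · rw [Hy2 i1 l _ hc, zero_mul]
          · intro l _
            by_cases hc : (l : ℕ) = (i1 : ℕ) + degM x
            · rw [Hy3 l i2 ⟨(i3:ℕ)+1, h⟩ (by omega) hdeep, mul_zero]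
            · rw [Hx2 i1 l _ hc, zero_mul]
      · rw [dif_neg (by omega), dif_neg (by omega), add_zero]


end Aux

/-- Claim 3.7 of the paper.  Let `F` be a commutative ring, `n, d ≥ 1`, and
let `m` be an element of the free magma on `Fin n` of degree `d' ≤ d` and depth `l`.  Let
`Φ(m) ∈ C'_d(R)` be the evaluation of `m` at `(Z_1, …, Z_n)` under the anticommutator product
`⊙` (`a ⊙ b = a ∘ b + b ∘ a`).  Then (all indices zero-based; the paper's 1-based indices are
obtained by adding one):
(1) for every entry position `(i1, i2, i3)` with `i2 = i1 + d'` and `i3 + l ≤ d`, the entry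
    of `Φ(m)` there equals the sum, over all choices `ε` of a Boolean for each internal node
    of `m`, of `∏_{t=1}^{d'} z_{σ_{m_ε}(t), (t-1) + i1, (l^{m_ε}_t - 1) + i3}`;
(2) every entry with `i2 ≠ i1 + d'` is zero; and
(3) every entry with `i2 = i1 + d'` but `d < i3 + l` is zero. -/
theorem entries_of_anticommutator_eval_at_Z {F : Type*} [CommRing F] (n d : ℕ)
    (hn : 1 ≤ n) (hd : 1 ≤ d) (m : FreeMagma (Fin n)) (d' l : ℕ)
    (hdeg : degM m = d') (hd' : d' ≤ d) (hdepth : depthM m = l) :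
    (∀ (i1 i2 : Fin (d + 1)) (i3 : Fin d),
        (i2 : ℕ) = (i1 : ℕ) + d' → (i3 : ℕ) + l ≤ d →
        evalWith (fun a b : Arr d (MvPolynomial (Fin n × Fin d × Fin d) F) =>
            a * b + b * a) (Z F n d) m i1 i2 i3
          = ((variants m).map fun m' => monProd F d (i1 : ℕ) (i3 : ℕ) m').sum) ∧
    (∀ (i1 i2 : Fin (d + 1)) (i3 : Fin d),
        (i2 : ℕ) ≠ (i1 : ℕ) + d' →
        evalWith (fun a b : Arr d (MvPolynomial (Fin n × Fin d × Fin d) F) =>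
            a * b + b * a) (Z F n d) m i1 i2 i3 = 0) ∧
    (∀ (i1 i2 : Fin (d + 1)) (i3 : Fin d),
        (i2 : ℕ) = (i1 : ℕ) + d' → d < (i3 : ℕ) + l →
        evalWith (fun a b : Arr d (MvPolynomial (Fin n × Fin d × Fin d) F) =>
            a * b + b * a) (Z F n d) m i1 i2 i3 = 0) := by
  subst hdeg; subst hdepth
  exact main_lemma d m hd'


end NAPIT
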